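/- Let P be a type-C poset on {-n,...,-1,1,...,n}. Then the set of 2n×2n matrices spanned by {E_{-i,-i} - E_{i,i} : i ∈ [n]} ∪ {E_{-i,-j} - E_{j,i} : -i ⪯ -j and j ⪯ i} ∪ {E_{-i,j} + E_{-j,i} : -i ⪯ j and -j ⪯ i, i ≠ j} ∪ {E_{-i,i} : -i ⪯ i} is a Lie subalgebra of gl(2n) (closed under the matrix commutator). -/

import Mathlib

/-- The underlying set `{-n,...,-1,1,...,n}` of a type-C poset, as a finset of integers. -/
noncomputable def Idx (n : ℕ) : Finset ℤ := (Finset.Icc (-(n : ℤ)) (n : ℤ)).erase 0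

/-- The index type `{-n,...,-1,1,...,n}` for rows and columns of `2n × 2n` matrices. -/
abbrev Iv (n : ℕ) := {i : ℤ // i ∈ Idx n}

/-- The matrix unit `E_{a,b}` with a `1` in entry `(a,b)` and `0` elsewhere, for rows and
columns indexed by `{-n,...,-1,1,...,n}`. -/
def EE (k : Type*) [Field k] (n : ℕ) (a b : ℤ) : Matrix (Iv n) (Iv n) k :=
  fun p q => if p.1 = a ∧ q.1 = b then 1 else 0

/-- A type-C poset: a poset on `{-n,...,-1,1,...,n}` such that `i ⪯ j` implies `i ≤ j`,
and for `i ≠ -j`, `i ⪯ j` iff `-j ⪯ -i`. -/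
structure TypeCPoset (n : ℕ) where
  le : ℤ → ℤ → Prop
  mem_of_le : ∀ i j, le i j → i ∈ Idx n ∧ j ∈ Idx n
  refl : ∀ i ∈ Idx n, le i i
  antisymm : ∀ i j, le i j → le j i → i = j
  trans : ∀ i j l, le i j → le j l → le i l
  le_int : ∀ i j, le i j → i ≤ j
  symm : ∀ i j, i ≠ -j → (le i j ↔ le (-j) (-i))

/-- The generating set of the type-C Lie poset algebra `g_C(P)`:
`{E_{-i,-i} - E_{i,i} : i ∈ [n]} ∪ {E_{-i,-j} - E_{j,i} : -i ⪯ -j, j ⪯ i} ∪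
{E_{-i,j} + E_{-j,i} : -i ⪯ j, -j ⪯ i, i ≠ j} ∪ {E_{-i,i} : -i ⪯ i}`. -/
def gCgen (k : Type*) [Field k] (n : ℕ) (le : ℤ → ℤ → Prop) :
    Set (Matrix (Iv n) (Iv n) k) :=
  {M | (∃ i : ℤ, 1 ≤ i ∧ i ≤ n ∧ M = EE k n (-i) (-i) - EE k n i i) ∨
       (∃ i j : ℤ, 1 ≤ i ∧ i ≤ n ∧ 1 ≤ j ∧ j ≤ n ∧ le (-i) (-j) ∧ le j i ∧
          M = EE k n (-i) (-j) - EE k n j i) ∨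
       (∃ i j : ℤ, 1 ≤ i ∧ i ≤ n ∧ 1 ≤ j ∧ j ≤ n ∧ le (-i) j ∧ le (-j) i ∧ i ≠ j ∧
          M = EE k n (-i) j + EE k n (-j) i) ∨
       (∃ i : ℤ, 1 ≤ i ∧ i ≤ n ∧ le (-i) i ∧ M = EE k n (-i) i)}

namespace Stmt4Aux

variable {k : Type*} [Field k] {n : ℕ}

lemma mem_Idx {i : ℤ} : i ∈ Idx n ↔ i ≠ 0 ∧ -(n:ℤ) ≤ i ∧ i ≤ n := by
  simp [Idx, Finset.mem_erase, Finset.mem_Icc, and_assoc]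

lemma EE_mul (a b c d : ℤ) (hb : b ∈ Idx n) :
    EE k n a b * EE k n c d = if b = c then EE k n a d else 0 := by
  ext p q
  rcases eq_or_ne b c with rfl | h
  · simp only [if_pos rfl, Matrix.mul_apply, EE]
    rw [Finset.sum_eq_single (⟨b, hb⟩ : Iv n)]
    · by_cases h1 : p.1 = a <;> by_cases h2 : q.1 = d <;> simp [EE, h1, h2]
    · intro r _ hr
      have : r.1 ≠ b := fun h => hr (Subtype.ext h)
      simp [this]
    · simp
  · simp only [if_neg h, Matrix.mul_apply, EE, Matrix.zero_apply]
    apply Finset.sum_eq_zero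
    intro r _
    by_cases h1 : r.1 = b
    · have : ¬ (r.1 = c ∧ q.1 = d) := fun hc => h (h1 ▸ hc.1)
      simp [this]
    · simp [h1]

lemma EE_mul_ne (a b c d : ℤ) (hb : b ∈ Idx n) (h : b ≠ c) :
    EE k n a b * EE k n c d = 0 := by
  rw [EE_mul a b c d hb, if_neg h]

variable {P : TypeCPoset n}

/-- bounds of elements related by le -/
lemma le_bounds {i j : ℤ} (h : P.le i j) :
    i ≠ 0 ∧ -(n:ℤ) ≤ i ∧ i ≤ n ∧ j ≠ 0 ∧ -(n:ℤ) ≤ j ∧ j ≤ n := by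
  obtain ⟨hi, hj⟩ := P.mem_of_le i j h
  rw [mem_Idx] at hi hj
  exact ⟨hi.1, hi.2.1, hi.2.2, hj.1, hj.2.1, hj.2.2⟩

lemma X_mem (i j : ℤ) (hi : 1 ≤ i) (hi' : i ≤ n) (hj : 1 ≤ j) (hj' : j ≤ n)
    (h1 : P.le (-i) (-j)) (h2 : P.le j i) :
    EE k n (-i) (-j) - EE k n j i ∈ Submodule.span k (gCgen k n P.le) :=
  Submodule.subset_span (Or.inr (Or.inl ⟨i, j, hi, hi', hj, hj', h1, h2, rfl⟩))

lemma Y_mem (i j : ℤ) (hi : 1 ≤ i) (hi' : i ≤ n) (hj : 1 ≤ j) (hj' : j ≤ n)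
    (h1 : P.le (-i) j) (h2 : P.le (-j) i) :
    EE k n (-i) j + EE k n (-j) i ∈ Submodule.span k (gCgen k n P.le) := by
  rcases eq_or_ne i j with rfl | hne
  · have hz : EE k n (-i) i ∈ Submodule.span k (gCgen k n P.le) :=
      Submodule.subset_span (Or.inr (Or.inr (Or.inr ⟨i, hi, hi', h1, rfl⟩)))
    have : EE k n (-i) i + EE k n (-i) i = (2 : k) • EE k n (-i) i := by
      rw [two_smul]
    rw [this]
    exact Submodule.smul_mem _ _ hz
  · exact Submodule.subset_span (Or.inr (Or.inr (Or.inl ⟨i, j, hi, hi', hj, hj', h1, h2, hne, rfl⟩)))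

/-- every generator is an X-form, Y-form, or Z-form -/
lemma gen_cases {A : Matrix (Iv n) (Iv n) k} (hA : A ∈ gCgen k n P.le) :
    (∃ i j : ℤ, 1 ≤ i ∧ i ≤ n ∧ 1 ≤ j ∧ j ≤ n ∧ P.le (-i) (-j) ∧ P.le j i ∧
        A = EE k n (-i) (-j) - EE k n j i) ∨
    (∃ i j : ℤ, 1 ≤ i ∧ i ≤ n ∧ 1 ≤ j ∧ j ≤ n ∧ P.le (-i) j ∧ P.le (-j) i ∧
        A = EE k n (-i) j + EE k n (-j) i) ∨
    (∃ i : ℤ, 1 ≤ i ∧ i ≤ n ∧ P.le (-i) i ∧ A = EE k n (-i) i) := by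
  rcases hA with ⟨i, hi, hi', rfl⟩ | ⟨i, j, hi, hi', hj, hj', h1, h2, rfl⟩ |
      ⟨i, j, hi, hi', hj, hj', h1, h2, _, rfl⟩ | ⟨i, hi, hi', h1, rfl⟩
  · exact Or.inl ⟨i, i, hi, hi', hi, hi',
      P.refl (-i) (mem_Idx.mpr ⟨by omega, by omega, by omega⟩),
      P.refl i (mem_Idx.mpr ⟨by omega, by omega, by omega⟩), rfl⟩
  · exact Or.inl ⟨i, j, hi, hi', hj, hj', h1, h2, rfl⟩
  · exact Or.inr (Or.inl ⟨i, j, hi, hi', hj, hj', h1, h2, rfl⟩)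
  · exact Or.inr (Or.inr ⟨i, hi, hi', h1, rfl⟩)

/-- upper-right block property: entries vanish unless row < 0 -/
def Up (A : Matrix (Iv n) (Iv n) k) : Prop :=
  (∀ p q : Iv n, q.1 < 0 → A p q = 0) ∧ (∀ p q : Iv n, 0 < p.1 → A p q = 0)

lemma up_EE (i j : ℤ) (hi : 1 ≤ i) (hj : 1 ≤ j) : Up (EE k n (-i) j) := by
  constructor
  · intro p q hq
    have : ¬ (p.1 = -i ∧ q.1 = j) := fun h => by omega
    simp [EE, this]
  · intro p q hp
    have : ¬ (p.1 = -i ∧ q.1 = j) := fun h => by omega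
    simp [EE, this]

lemma up_add {A B : Matrix (Iv n) (Iv n) k} (hA : Up A) (hB : Up B) : Up (A + B) := by
  constructor
  · intro p q hq; simp [Matrix.add_apply, hA.1 p q hq, hB.1 p q hq]
  · intro p q hp; simp [Matrix.add_apply, hA.2 p q hp, hB.2 p q hp]

lemma up_mul_up {A B : Matrix (Iv n) (Iv n) k} (hA : Up A) (hB : Up B) : A * B = 0 := by
  ext p q
  rw [Matrix.mul_apply, Matrix.zero_apply]
  apply Finset.sum_eq_zero
  intro r _
  have hr : r.1 ≠ 0 := (mem_Idx.mp r.2).1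
  rcases lt_or_gt_of_ne hr with h | h
  · rw [hA.1 p r h, zero_mul]
  · rw [hB.2 r q h, mul_zero]

/-- bracket of two X-forms -/
lemma brXX (i j p q : ℤ) (hi : 1 ≤ i) (hi' : i ≤ n) (hj : 1 ≤ j) (hj' : j ≤ n)
    (hp : 1 ≤ p) (hp' : p ≤ n) (hq : 1 ≤ q) (hq' : q ≤ n)
    (h1 : P.le (-i) (-j)) (h2 : P.le j i) (h3 : P.le (-p) (-q)) (h4 : P.le q p) :
    (EE k n (-i) (-j) - EE k n j i) * (EE k n (-p) (-q) - EE k n q p) -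
    (EE k n (-p) (-q) - EE k n q p) * (EE k n (-i) (-j) - EE k n j i) ∈
      Submodule.span k (gCgen k n P.le) := by
  have hmj : (-j) ∈ Idx n := mem_Idx.mpr ⟨by omega, by omega, by omega⟩
  have hii : (i : ℤ) ∈ Idx n := mem_Idx.mpr ⟨by omega, by omega, by omega⟩
  have hmq : (-q) ∈ Idx n := mem_Idx.mpr ⟨by omega, by omega, by omega⟩
  have hpp : (p : ℤ) ∈ Idx n := mem_Idx.mpr ⟨by omega, by omega, by omega⟩
  have e1 : EE k n (-i) (-j) * EE k n (-p) (-q) = if j = p then EE k n (-i) (-q) else 0 := by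
    rw [EE_mul _ _ _ _ hmj]; simp [neg_inj]
  have e2 : EE k n (-i) (-j) * EE k n q p = 0 := EE_mul_ne _ _ _ _ hmj (by omega)
  have e3 : EE k n j i * EE k n (-p) (-q) = 0 := EE_mul_ne _ _ _ _ hii (by omega)
  have e4 : EE k n j i * EE k n q p = if i = q then EE k n j p else 0 := EE_mul _ _ _ _ hii
  have e5 : EE k n (-p) (-q) * EE k n (-i) (-j) = if q = i then EE k n (-p) (-j) else 0 := by
    rw [EE_mul _ _ _ _ hmq]; simp [neg_inj]
  have e6 : EE k n (-p) (-q) * EE k n j i = 0 := EE_mul_ne _ _ _ _ hmq (by omega)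
  have e7 : EE k n q p * EE k n (-i) (-j) = 0 := EE_mul_ne _ _ _ _ hpp (by omega)
  have e8 : EE k n q p * EE k n j i = if p = j then EE k n q i else 0 :=
    EE_mul _ _ _ _ hpp
  rw [sub_mul, sub_mul, mul_sub, mul_sub, mul_sub, mul_sub, e1, e2, e3, e4, e5, e6, e7, e8]
  by_cases hjp : j = p
  · by_cases hiq : i = q
    · rw [if_pos hjp, if_pos hiq, if_pos hiq.symm, if_pos hjp.symm]
      subst hjp; subst hiq
      have key : EE k n (-i) (-i) - 0 - (0 - EE k n j j) -
          (EE k n (-j) (-j) - 0 - (0 - EE k n i i)) =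
          (EE k n (-i) (-i) - EE k n i i) - (EE k n (-j) (-j) - EE k n j j) := by abel
      rw [key]
      exact Submodule.sub_mem _
        (X_mem i i hi hi' hi hi' (P.trans _ _ _ h1 h3) (P.trans _ _ _ h4 h2))
        (X_mem j j hj hj' hj hj' (P.trans _ _ _ h3 h1) (P.trans _ _ _ h2 h4))
    · rw [if_pos hjp, if_neg hiq, if_neg (fun h => hiq h.symm), if_pos hjp.symm]
      subst hjp
      have key : EE k n (-i) (-q) - 0 - (0 - 0) - (0 - 0 - (0 - EE k n q i)) =
          EE k n (-i) (-q) - EE k n q i := by abel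
      rw [key]
      exact X_mem i q hi hi' hq hq' (P.trans _ _ _ h1 h3) (P.trans _ _ _ h4 h2)
  · by_cases hiq : i = q
    · rw [if_neg hjp, if_pos hiq, if_pos hiq.symm, if_neg (fun h => hjp h.symm)]
      subst hiq
      have key : 0 - 0 - (0 - EE k n j p) - (EE k n (-p) (-j) - 0 - (0 - 0)) =
          -(EE k n (-p) (-j) - EE k n j p) := by abel
      rw [key]
      exact Submodule.neg_mem _ (X_mem p j hp hp' hj hj' (P.trans _ _ _ h3 h1)
        (P.trans _ _ _ h2 h4))
    · rw [if_neg hjp, if_neg hiq, if_neg (fun h => hiq h.symm), if_neg (fun h => hjp h.symm)]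
      have key : (0 : Matrix (Iv n) (Iv n) k) - 0 - (0 - 0) - (0 - 0 - (0 - 0)) = 0 := by abel
      rw [key]
      exact Submodule.zero_mem _

/-- bracket of an X-form with a Y-form -/
lemma brXY (i j p q : ℤ) (hi : 1 ≤ i) (hi' : i ≤ n) (hj : 1 ≤ j) (hj' : j ≤ n)
    (hp : 1 ≤ p) (hp' : p ≤ n) (hq : 1 ≤ q) (hq' : q ≤ n)
    (h1 : P.le (-i) (-j)) (h2 : P.le j i) (h3 : P.le (-p) q) (h4 : P.le (-q) p) :
    (EE k n (-i) (-j) - EE k n j i) * (EE k n (-p) q + EE k n (-q) p) -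
    (EE k n (-p) q + EE k n (-q) p) * (EE k n (-i) (-j) - EE k n j i) ∈
      Submodule.span k (gCgen k n P.le) := by
  have hmj : (-j) ∈ Idx n := mem_Idx.mpr ⟨by omega, by omega, by omega⟩
  have hii : (i : ℤ) ∈ Idx n := mem_Idx.mpr ⟨by omega, by omega, by omega⟩
  have hqq : (q : ℤ) ∈ Idx n := mem_Idx.mpr ⟨by omega, by omega, by omega⟩
  have hpp : (p : ℤ) ∈ Idx n := mem_Idx.mpr ⟨by omega, by omega, by omega⟩
  have f1 : EE k n (-i) (-j) * EE k n (-p) q = if j = p then EE k n (-i) q else 0 := by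
    rw [EE_mul _ _ _ _ hmj]; simp [neg_inj]
  have f2 : EE k n (-i) (-j) * EE k n (-q) p = if j = q then EE k n (-i) p else 0 := by
    rw [EE_mul _ _ _ _ hmj]; simp [neg_inj]
  have f3 : EE k n j i * EE k n (-p) q = 0 := EE_mul_ne _ _ _ _ hii (by omega)
  have f4 : EE k n j i * EE k n (-q) p = 0 := EE_mul_ne _ _ _ _ hii (by omega)
  have f5 : EE k n (-p) q * EE k n (-i) (-j) = 0 := EE_mul_ne _ _ _ _ hqq (by omega)
  have f6 : EE k n (-p) q * EE k n j i = if q = j then EE k n (-p) i else 0 :=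
    EE_mul _ _ _ _ hqq
  have f7 : EE k n (-q) p * EE k n (-i) (-j) = 0 := EE_mul_ne _ _ _ _ hpp (by omega)
  have f8 : EE k n (-q) p * EE k n j i = if p = j then EE k n (-q) i else 0 :=
    EE_mul _ _ _ _ hpp
  rw [sub_mul, mul_add, mul_add, add_mul, mul_sub, mul_sub, f1, f2, f3, f4, f5, f6, f7, f8]
  by_cases hjp : j = p
  · by_cases hjq : j = q
    · rw [if_pos hjp, if_pos hjq, if_pos hjq.symm, if_pos hjp.symm]
      subst hjp; subst hjq
      have key : EE k n (-i) j + EE k n (-i) j - (0 + 0) -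
          (0 - EE k n (-j) i + (0 - EE k n (-j) i)) =
          (EE k n (-i) j + EE k n (-j) i) + (EE k n (-i) j + EE k n (-j) i) := by abel
      rw [key]
      have hm : EE k n (-i) j + EE k n (-j) i ∈ Submodule.span k (gCgen k n P.le) :=
        Y_mem i j hi hi' hj hj' (P.trans _ _ _ h1 h3) (P.trans _ _ _ h4 h2)
      exact Submodule.add_mem _ hm hm
    · rw [if_pos hjp, if_neg hjq, if_neg (fun h => hjq h.symm), if_pos hjp.symm]
      subst hjp
      have key : EE k n (-i) q + 0 - (0 + 0) - (0 - 0 + (0 - EE k n (-q) i)) =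
          EE k n (-i) q + EE k n (-q) i := by abel
      rw [key]
      exact Y_mem i q hi hi' hq hq' (P.trans _ _ _ h1 h3) (P.trans _ _ _ h4 h2)
  · by_cases hjq : j = q
    · rw [if_neg hjp, if_pos hjq, if_pos hjq.symm, if_neg (fun h => hjp h.symm)]
      subst hjq
      have key : 0 + EE k n (-i) p - (0 + 0) - (0 - EE k n (-p) i + (0 - 0)) =
          EE k n (-i) p + EE k n (-p) i := by abel
      rw [key]
      exact Y_mem i p hi hi' hp hp' (P.trans _ _ _ h1 h4) (P.trans _ _ _ h3 h2)
    · rw [if_neg hjp, if_neg hjq, if_neg (fun h => hjq h.symm), if_neg (fun h => hjp h.symm)]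
      have key : (0 : Matrix (Iv n) (Iv n) k) + 0 - (0 + 0) - (0 - 0 + (0 - 0)) = 0 := by abel
      rw [key]
      exact Submodule.zero_mem _

/-- bracket of an X-form with a Z-form -/
lemma brXZ (i j p : ℤ) (hi : 1 ≤ i) (hi' : i ≤ n) (hj : 1 ≤ j) (hj' : j ≤ n)
    (hp : 1 ≤ p) (hp' : p ≤ n)
    (h1 : P.le (-i) (-j)) (h2 : P.le j i) (h3 : P.le (-p) p) :
    (EE k n (-i) (-j) - EE k n j i) * EE k n (-p) p -
    EE k n (-p) p * (EE k n (-i) (-j) - EE k n j i) ∈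
      Submodule.span k (gCgen k n P.le) := by
  have hmj : (-j) ∈ Idx n := mem_Idx.mpr ⟨by omega, by omega, by omega⟩
  have hii : (i : ℤ) ∈ Idx n := mem_Idx.mpr ⟨by omega, by omega, by omega⟩
  have hpp : (p : ℤ) ∈ Idx n := mem_Idx.mpr ⟨by omega, by omega, by omega⟩
  have g1 : EE k n (-i) (-j) * EE k n (-p) p = if j = p then EE k n (-i) p else 0 := by
    rw [EE_mul _ _ _ _ hmj]; simp [neg_inj]
  have g2 : EE k n j i * EE k n (-p) p = 0 := EE_mul_ne _ _ _ _ hii (by omega)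
  have g3 : EE k n (-p) p * EE k n (-i) (-j) = 0 := EE_mul_ne _ _ _ _ hpp (by omega)
  have g4 : EE k n (-p) p * EE k n j i = if p = j then EE k n (-p) i else 0 :=
    EE_mul _ _ _ _ hpp
  rw [sub_mul, mul_sub, g1, g2, g3, g4]
  by_cases hjp : j = p
  · rw [if_pos hjp, if_pos hjp.symm]
    subst hjp
    have key : EE k n (-i) j - 0 - (0 - EE k n (-j) i) =
        EE k n (-i) j + EE k n (-j) i := by abel
    rw [key]
    exact Y_mem i j hi hi' hj hj' (P.trans _ _ _ h1 h3) (P.trans _ _ _ h3 h2)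
  · rw [if_neg hjp, if_neg (fun h => hjp h.symm)]
    have key : (0 : Matrix (Iv n) (Iv n) k) - 0 - (0 - 0) = 0 := by abel
    rw [key]
    exact Submodule.zero_mem _

/-- bracket of two generators lands in the span -/
lemma key_bracket {A B : Matrix (Iv n) (Iv n) k}
    (hA : A ∈ gCgen k n P.le) (hB : B ∈ gCgen k n P.le) :
    A * B - B * A ∈ Submodule.span k (gCgen k n P.le) := by
  have upA : (∃ i j : ℤ, 1 ≤ i ∧ i ≤ n ∧ 1 ≤ j ∧ j ≤ n ∧ P.le (-i) j ∧ P.le (-j) i ∧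
        A = EE k n (-i) j + EE k n (-j) i) ∨
      (∃ i : ℤ, 1 ≤ i ∧ i ≤ n ∧ P.le (-i) i ∧ A = EE k n (-i) i) → Up A := by
    rintro (⟨i, j, hi, hi', hj, hj', _, _, rfl⟩ | ⟨i, hi, hi', _, rfl⟩)
    · exact up_add (up_EE i j hi hj) (up_EE j i hj hi)
    · exact up_EE i i hi hi
  rcases gen_cases hA with ⟨i, j, hi, hi', hj, hj', ha1, ha2, rfl⟩ | hAU
  · rcases gen_cases hB with ⟨p, q, hp, hp', hq, hq', hb1, hb2, rfl⟩ |
        ⟨p, q, hp, hp', hq, hq', hb1, hb2, rfl⟩ | ⟨p, hp, hp', hb1, rfl⟩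
    · exact brXX i j p q hi hi' hj hj' hp hp' hq hq' ha1 ha2 hb1 hb2
    · exact brXY i j p q hi hi' hj hj' hp hp' hq hq' ha1 ha2 hb1 hb2
    · exact brXZ i j p hi hi' hj hj' hp hp' ha1 ha2 hb1
  · have hUA : Up A := upA hAU
    rcases gen_cases hB with ⟨p, q, hp, hp', hq, hq', hb1, hb2, rfl⟩ | hBU
    · -- B is an X-form: use antisymmetry of the bracket
      obtain (⟨i, j, hi, hi', hj, hj', ha1, ha2, rfl⟩ | ⟨i, hi, hi', ha1, rfl⟩) := hAU
      · have := brXY p q i j hp hp' hq hq' hi hi' hj hj' hb1 hb2 ha1 ha2 (k := k)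
        have e : (EE k n (-i) j + EE k n (-j) i) * (EE k n (-p) (-q) - EE k n q p) -
            (EE k n (-p) (-q) - EE k n q p) * (EE k n (-i) j + EE k n (-j) i) =
            -((EE k n (-p) (-q) - EE k n q p) * (EE k n (-i) j + EE k n (-j) i) -
              (EE k n (-i) j + EE k n (-j) i) * (EE k n (-p) (-q) - EE k n q p)) := by abel
        rw [e]
        exact Submodule.neg_mem _ this
      · have := brXZ p q i hp hp' hq hq' hi hi' hb1 hb2 ha1 (k := k)
        have e : EE k n (-i) i * (EE k n (-p) (-q) - EE k n q p) -
            (EE k n (-p) (-q) - EE k n q p) * EE k n (-i) i =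
            -((EE k n (-p) (-q) - EE k n q p) * EE k n (-i) i -
              EE k n (-i) i * (EE k n (-p) (-q) - EE k n q p)) := by abel
        rw [e]
        exact Submodule.neg_mem _ this
    · have upB : (∃ i j : ℤ, 1 ≤ i ∧ i ≤ n ∧ 1 ≤ j ∧ j ≤ n ∧ P.le (-i) j ∧ P.le (-j) i ∧
            B = EE k n (-i) j + EE k n (-j) i) ∨
          (∃ i : ℤ, 1 ≤ i ∧ i ≤ n ∧ P.le (-i) i ∧ B = EE k n (-i) i) → Up B := by
        rintro (⟨i, j, hi, hi', hj, hj', _, _, rfl⟩ | ⟨i, hi, hi', _, rfl⟩)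
        · exact up_add (up_EE i j hi hj) (up_EE j i hj hi)
        · exact up_EE i i hi hi
      have hUB : Up B := upB hBU
      rw [up_mul_up hUA hUB, up_mul_up hUB hUA, sub_zero]
      exact Submodule.zero_mem _

end Stmt4Aux

open Stmt4Aux

/-- For a type-C poset `P`, the span of the indicated matrices is a Lie
subalgebra of `gl(2n)`: it is closed under the matrix commutator. -/
theorem stmt4 (k : Type*) [Field k] (n : ℕ) (P : TypeCPoset n)
    (A B : Matrix (Iv n) (Iv n) k)
    (hA : A ∈ Submodule.span k (gCgen k n P.le))
    (hB : B ∈ Submodule.span k (gCgen k n P.le)) :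
    A * B - B * A ∈ Submodule.span k (gCgen k n P.le) := by
  induction hA using Submodule.span_induction with
  | mem A hA =>
    induction hB using Submodule.span_induction with
    | mem B hB => exact key_bracket hA hB
    | zero => simp
    | add x y hx hy ihx ihy =>
      have e : A * (x + y) - (x + y) * A = (A * x - x * A) + (A * y - y * A) := by
        rw [mul_add, add_mul]; abel
      rw [e]; exact Submodule.add_mem _ ihx ihy
    | smul c x hx ih =>
      have e : A * (c • x) - (c • x) * A = c • (A * x - x * A) := by
        rw [Matrix.mul_smul, Matrix.smul_mul, smul_sub]
      rw [e]; exact Submodule.smul_mem _ _ ih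
  | zero => simp
  | add x y hx hy ihx ihy =>
    have e : (x + y) * B - B * (x + y) = (x * B - B * x) + (y * B - B * y) := by
      rw [add_mul, mul_add]; abel
    rw [e]; exact Submodule.add_mem _ ihx ihy
  | smul c x hx ih =>
    have e : (c • x) * B - B * (c • x) = c • (x * B - B * x) := by
      rw [Matrix.mul_smul, Matrix.smul_mul, smul_sub]
    rw [e]; exact Submodule.smul_mem _ _ ih
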